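/- arXiv:2604.08176 — 5 statements merged into one kernel-verified Lean document; each statement's English description precedes it below -/
import Mathlib

section
/- Let j be a natural number, let u : ℝ → ℝ be j-times continuously differentiable, let x : ℝ → ℝ^N satisfy, for every t ∈ ℝ, that x has derivative A x(t) + u(t) B at t, and define y(t) = ⟨C, x(t)⟩ + D u(t). Then for every t ∈ ℝ the j-th derivative of y satisfies y^(j)(t) = ⟨C, A^j x(t)⟩ + Σ_{i=0}^{j} h_{j-i} · u^(i)(t), where u^(i) denotes the i-th iterated derivative of u. -/
open Finset Matrix

lemma dot_mulVec_hasDerivAt {N : ℕ} (C : Fin N → ℝ) (M : Matrix (Fin N) (Fin N) ℝ)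
    {x : ℝ → Fin N → ℝ} {v : Fin N → ℝ} {t : ℝ} (hx : HasDerivAt x v t) :
    HasDerivAt (fun s => C ⬝ᵥ M.mulVec (x s)) (C ⬝ᵥ M.mulVec v) t := by
  simp only [dotProduct, mulVec]
  apply HasDerivAt.fun_sum
  intro i _
  apply HasDerivAt.const_mul
  apply HasDerivAt.fun_sum
  intro k _
  exact ((hasDerivAt_pi.mp hx) k).const_mul _

/-- The Markov parameters of the state-space representation
`ẋ = A x + u B`, `y = ⟨C, x⟩ + D u`: `h 0 = D` and `h (k+1) = ⟨C, A^k B⟩`. -/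
def markovParam {N : ℕ} (A : Matrix (Fin N) (Fin N) ℝ) (B C : Fin N → ℝ) (D : ℝ) : ℕ → ℝ
  | 0 => D
  | (k + 1) => C ⬝ᵥ (A ^ k).mulVec B

/-- If `u` is `j`-times continuously differentiable, `x` solves the state equation
`ẋ(t) = A x(t) + u(t) B` and `y(t) = ⟨C, x(t)⟩ + D u(t)`, then
`y⁽ʲ⁾(t) = ⟨C, Aʲ x(t)⟩ + Σ_{i=0}^{j} h_{j-i} u⁽ⁱ⁾(t)`. -/
theorem output_iteratedDeriv_eq {N : ℕ} (A : Matrix (Fin N) (Fin N) ℝ) (B C : Fin N → ℝ)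
    (D : ℝ) (j : ℕ) (u : ℝ → ℝ) (hu : ContDiff ℝ (j : ℕ∞) u)
    (x : ℝ → Fin N → ℝ) (hx : ∀ t : ℝ, HasDerivAt x (A.mulVec (x t) + u t • B) t)
    (y : ℝ → ℝ) (hy : ∀ t : ℝ, y t = C ⬝ᵥ x t + D * u t) :
    ∀ t : ℝ, iteratedDeriv j y t =
      C ⬝ᵥ (A ^ j).mulVec (x t) +
        ∑ i ∈ Finset.range (j + 1), markovParam A B C D (j - i) * iteratedDeriv i u t := by
  induction j with
  | zero =>
    intro t
    simp [markovParam, hy t, Matrix.one_mulVec]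
  | succ j ih =>
    have hu' : ContDiff ℝ (j : ℕ∞) u := hu.of_le (by exact_mod_cast Nat.le_succ j)
    have IH := ih hu'
    intro t
    rw [iteratedDeriv_succ, funext IH]
    have h1 : HasDerivAt (fun s => C ⬝ᵥ (A ^ j).mulVec (x s))
        (C ⬝ᵥ (A ^ j).mulVec (A.mulVec (x t) + u t • B)) t :=
      dot_mulVec_hasDerivAt _ _ (hx t)
    have h2 : ∀ i ∈ Finset.range (j + 1),
        HasDerivAt (fun s => markovParam A B C D (j - i) * iteratedDeriv i u s)
          (markovParam A B C D (j - i) * iteratedDeriv (i + 1) u t) t := by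
      intro i hi
      have hdiff : DifferentiableAt ℝ (iteratedDeriv i u) t := by
        have := hu.differentiable_iteratedDeriv i
          (by exact_mod_cast Nat.lt_succ_of_le (Nat.lt_succ_iff.mp (Finset.mem_range.mp hi)))
        exact this t
      have := hdiff.hasDerivAt.const_mul (markovParam A B C D (j - i))
      rwa [← iteratedDeriv_succ] at this
    have htot := h1.fun_add (HasDerivAt.fun_sum h2)
    rw [htot.deriv]
    have key : C ⬝ᵥ (A ^ j).mulVec (A.mulVec (x t) + u t • B)
        = C ⬝ᵥ (A ^ (j + 1)).mulVec (x t) + markovParam A B C D (j + 1) * u t := by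
      rw [Matrix.mulVec_add, dotProduct_add, Matrix.mulVec_smul,
        dotProduct_smul, Matrix.mulVec_mulVec, ← pow_succ]
      simp [markovParam, smul_eq_mul, mul_comm]
    rw [key, Finset.sum_range_succ' (fun i => markovParam A B C D (j + 1 - i) * iteratedDeriv i u t)]
    simp only [Nat.succ_sub_succ, Nat.sub_zero, iteratedDeriv_zero]
    ring
end

section
/- Let n ≥ 1 and r ≤ n, and suppose the Markov parameters satisfy h_i = 0 for all i < r and h_r ≠ 0. Let x : ℝ → ℝ^N be continuous at 0, and let u_0, …, u_{n-1}, y_0, …, y_{n-1} : ℝ → ℝ satisfy, for every j < n and every t ≠ 0, y_j(t) = ⟨C, A^j x(t)⟩ + Σ_{i=0}^{j} h_{j-i} · u_i(t). Suppose each u_i has a left limit u_i⁻ and a right limit u_i⁺ at t = 0. Then every y_j (j < n) has equal left and right limits at 0 (i.e., the output vector is continuous across t = 0) if and only if u_i⁺ = u_i⁻ for every index i with i + r < n (i.e., u and its first m − 1 derivatives, m = n − r, are continuous at 0). [Theorem 1 of the paper, stated for the equivalent state-space representation.] -/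
open Finset Matrix Filter Topology

private lemma cont_lin {N : ℕ} (M : Matrix (Fin N) (Fin N) ℝ) (C : Fin N → ℝ) :
    Continuous fun v : Fin N → ℝ => C ⬝ᵥ M.mulVec v := by
  simp only [dotProduct, mulVec]
  exact continuous_finset_sum _ fun i _ =>
    continuous_const.mul (continuous_finset_sum _ fun j _ =>
      continuous_const.mul (continuous_apply j))

private lemma alg (h : ℕ → ℝ) (r n : ℕ) (hr0 : ∀ i < r, h i = 0) (hr : h r ≠ 0) (d : ℕ → ℝ) :
    (∀ j < n, ∑ i ∈ Finset.range (j + 1), h (j - i) * d i = 0) ↔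
      (∀ i, i + r < n → d i = 0) := by
  constructor
  · intro H i
    induction i using Nat.strong_induction_on with
    | _ i IH =>
      intro hi
      have hsum := H (i + r) hi
      rw [Finset.sum_eq_single i] at hsum
      · have hir : i + r - i = r := by omega
        rw [hir] at hsum
        rcases mul_eq_zero.mp hsum with h1 | h1
        · exact absurd h1 hr
        · exact h1
      · intro b hb hbi
        rcases lt_or_gt_of_ne hbi with hlt | hgt
        · rw [IH b hlt (by omega), mul_zero]
        · have : i + r - b < r := by
            have := Finset.mem_range.mp hb; omega
          rw [hr0 _ this, zero_mul]
      · intro hni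
        exact absurd (Finset.mem_range.mpr (by omega)) hni
  · intro H j hj
    apply Finset.sum_eq_zero
    intro i hi
    by_cases hc : j - i < r
    · rw [hr0 _ hc, zero_mul]
    · have hij : i < j + 1 := Finset.mem_range.mp hi
      rw [H i (by omega), mul_zero]

/-- Theorem 1 of the paper, for the equivalent state-space representation: if the system
has relative degree `r` (the first `r` Markov parameters vanish and the `r`-th does not),
then the output vector `(y_0, …, y_{n-1})` is continuous across `t = 0` (equal one-sided
limits) iff `u_i⁺ = u_i⁻` for every `i` with `i + r < n`, i.e. iff `u` and its first
`m − 1` derivatives (`m = n − r`) are continuous at `0`. -/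
theorem output_continuous_iff_input_continuous {N : ℕ} (A : Matrix (Fin N) (Fin N) ℝ)
    (B C : Fin N → ℝ) (D : ℝ) (n r : ℕ) (hn : 1 ≤ n) (hrn : r ≤ n)
    (hr0 : ∀ i < r, markovParam A B C D i = 0) (hr : markovParam A B C D r ≠ 0)
    (x : ℝ → Fin N → ℝ) (hx : ContinuousAt x 0)
    (u y : ℕ → ℝ → ℝ)
    (hy : ∀ j < n, ∀ t : ℝ, t ≠ 0 →
      y j t = C ⬝ᵥ (A ^ j).mulVec (x t) +
        ∑ i ∈ Finset.range (j + 1), markovParam A B C D (j - i) * u i t)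
    (um up : ℕ → ℝ)
    (hum : ∀ i < n, Tendsto (u i) (𝓝[<] 0) (𝓝 (um i)))
    (hup : ∀ i < n, Tendsto (u i) (𝓝[>] 0) (𝓝 (up i))) :
    (∀ j < n, ∃ L : ℝ, Tendsto (y j) (𝓝[<] 0) (𝓝 L) ∧ Tendsto (y j) (𝓝[>] 0) (𝓝 L)) ↔
      (∀ i, i + r < n → up i = um i) := by
  set h : ℕ → ℝ := markovParam A B C D with hh
  have key : ∀ j < n,
      Tendsto (y j) (𝓝[<] 0)
        (𝓝 (C ⬝ᵥ (A ^ j).mulVec (x 0) + ∑ i ∈ Finset.range (j + 1), h (j - i) * um i)) ∧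
      Tendsto (y j) (𝓝[>] 0)
        (𝓝 (C ⬝ᵥ (A ^ j).mulVec (x 0) + ∑ i ∈ Finset.range (j + 1), h (j - i) * up i)) := by
    intro j hj
    have hc : Tendsto (fun t => C ⬝ᵥ (A ^ j).mulVec (x t)) (𝓝 (0 : ℝ))
        (𝓝 (C ⬝ᵥ (A ^ j).mulVec (x 0))) := ((cont_lin (A ^ j) C).continuousAt).comp hx
    constructor
    · have heq : (fun t => C ⬝ᵥ (A ^ j).mulVec (x t) +
          ∑ i ∈ Finset.range (j + 1), h (j - i) * u i t) =ᶠ[𝓝[<] (0 : ℝ)] y j := by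
        filter_upwards [self_mem_nhdsWithin] with t ht
        exact (hy j hj t (ne_of_lt ht)).symm
      refine Tendsto.congr' heq ?_
      exact (hc.mono_left nhdsWithin_le_nhds).add (tendsto_finset_sum _ fun i hi =>
        (hum i (lt_of_le_of_lt (Nat.lt_succ_iff.mp (Finset.mem_range.mp hi)) hj)).const_mul _)
    · have heq : (fun t => C ⬝ᵥ (A ^ j).mulVec (x t) +
          ∑ i ∈ Finset.range (j + 1), h (j - i) * u i t) =ᶠ[𝓝[>] (0 : ℝ)] y j := by
        filter_upwards [self_mem_nhdsWithin] with t ht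
        exact (hy j hj t (ne_of_gt ht)).symm
      refine Tendsto.congr' heq ?_
      exact (hc.mono_left nhdsWithin_le_nhds).add (tendsto_finset_sum _ fun i hi =>
        (hup i (lt_of_le_of_lt (Nat.lt_succ_iff.mp (Finset.mem_range.mp hi)) hj)).const_mul _)
  constructor
  · intro hy' i hir
    have hd0 : ∀ j < n, ∑ i ∈ Finset.range (j + 1), h (j - i) * (up i - um i) = 0 := by
      intro j hj
      obtain ⟨L, hL1, hL2⟩ := hy' j hj
      have e1 := tendsto_nhds_unique hL1 (key j hj).1
      have e2 := tendsto_nhds_unique hL2 (key j hj).2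
      have e3 : ∑ i ∈ Finset.range (j + 1), h (j - i) * um i
          = ∑ i ∈ Finset.range (j + 1), h (j - i) * up i := by linarith
      simp only [mul_sub, Finset.sum_sub_distrib]
      linarith
    have := (alg h r n hr0 hr (fun i => up i - um i)).mp hd0 i hir
    linarith
  · intro hu j hj
    refine ⟨_, (key j hj).1, ?_⟩
    have e : ∑ i ∈ Finset.range (j + 1), h (j - i) * um i
        = ∑ i ∈ Finset.range (j + 1), h (j - i) * up i := by
      refine Finset.sum_congr rfl fun i hi => ?_
      by_cases hc : j - i < r
      · rw [hr0 _ hc, zero_mul, zero_mul]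
      · have hij : i < j + 1 := Finset.mem_range.mp hi
        rw [hu i (by omega)]
    rw [e]
    exact (key j hj).2
end

section
/- Let A be an N×N real matrix, B, C ∈ ℝ^N, D ∈ ℝ, let n ≥ 1, and let a_0, a_1, …, a_n and b_0, b_1, …, b_n be real numbers with a_0 = 1. Suppose there exists R ≥ ‖A‖ (L∞ operator norm) such that for every real s > R the matrix sI − A is invertible and (Σ_{i=0}^{n} a_i s^{n-i}) · (⟨C, (sI − A)⁻¹ B⟩ + D) = Σ_{j=0}^{n} b_j s^{n-j}. Then for every j with 0 ≤ j ≤ n, b_j = Σ_{i=0}^{j} a_i h_{j-i}. -/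
open Finset Matrix

attribute [local instance] Matrix.linftyOpNormedAddCommGroup Matrix.linftyOpNormedRing
  Matrix.linftyOpNormedAlgebra

open Filter Topology

lemma poly_eq_zero_of_tendsto (p : Polynomial ℝ)
    (h : Tendsto (fun s => p.eval s) atTop (𝓝 0)) : p = 0 := by
  rcases lt_or_ge 0 p.degree with hd | hd
  · have h2 : Tendsto (fun s => |p.eval s|) atTop (𝓝 0) := by simpa using h.abs
    exact absurd h2 (not_tendsto_nhds_of_tendsto_atTop (Polynomial.abs_tendsto_atTop p hd) 0)
  · rw [Polynomial.eq_C_of_degree_le_zero hd] at h ⊢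
    simp only [Polynomial.eval_C] at h
    rw [tendsto_nhds_unique tendsto_const_nhds h]
    simp

lemma step_inv {N : ℕ} (A : Matrix (Fin N) (Fin N) ℝ) {s : ℝ} (hs : s ≠ 0)
    (hU : IsUnit (s • (1 : Matrix (Fin N) (Fin N) ℝ) - A)) :
    (s • (1 : Matrix (Fin N) (Fin N) ℝ) - A)⁻¹
      = s⁻¹ • 1 + s⁻¹ • (A * (s • (1 : Matrix (Fin N) (Fin N) ℝ) - A)⁻¹) := by
  apply Matrix.inv_eq_right_inv
  have hcomm : (s • (1 : Matrix (Fin N) (Fin N) ℝ) - A) * A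
      = A * (s • (1 : Matrix (Fin N) (Fin N) ℝ) - A) := by
    simp [sub_mul, mul_sub, Matrix.smul_mul, Matrix.mul_smul]
  have hMi : (s • (1 : Matrix (Fin N) (Fin N) ℝ) - A)
      * (s • (1 : Matrix (Fin N) (Fin N) ℝ) - A)⁻¹ = 1 :=
    Matrix.mul_nonsing_inv _ ((Matrix.isUnit_iff_isUnit_det _).mp hU)
  calc (s • (1 : Matrix (Fin N) (Fin N) ℝ) - A)
      * (s⁻¹ • 1 + s⁻¹ • (A * (s • (1 : Matrix (Fin N) (Fin N) ℝ) - A)⁻¹))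
      = s⁻¹ • ((s • (1 : Matrix (Fin N) (Fin N) ℝ) - A) * 1)
        + s⁻¹ • (((s • (1 : Matrix (Fin N) (Fin N) ℝ) - A) * A)
          * (s • (1 : Matrix (Fin N) (Fin N) ℝ) - A)⁻¹) := by
        rw [Matrix.mul_add]; simp [Matrix.mul_smul, Matrix.mul_assoc]
    _ = 1 := by
        rw [hcomm, Matrix.mul_assoc, hMi, mul_one, Matrix.mul_one, smul_sub,
          smul_smul, inv_mul_cancel₀ hs, one_smul]
        abel

lemma trunc_inv {N : ℕ} (A : Matrix (Fin N) (Fin N) ℝ) {s : ℝ} (hs : s ≠ 0)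
    (hU : IsUnit (s • (1 : Matrix (Fin N) (Fin N) ℝ) - A)) (m : ℕ) :
    (s • (1 : Matrix (Fin N) (Fin N) ℝ) - A)⁻¹
      = (∑ k ∈ Finset.range m, (s⁻¹) ^ (k + 1) • A ^ k)
        + (s⁻¹) ^ m • (A ^ m * (s • (1 : Matrix (Fin N) (Fin N) ℝ) - A)⁻¹) := by
  induction m with
  | zero => simp
  | succ m ih =>
    have : A ^ m * (s • (1 : Matrix (Fin N) (Fin N) ℝ) - A)⁻¹
        = s⁻¹ • A ^ m + s⁻¹ • (A ^ (m + 1) * (s • (1 : Matrix (Fin N) (Fin N) ℝ) - A)⁻¹) := by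
      conv_lhs => rw [step_inv A hs hU]
      rw [Matrix.mul_add]
      simp [Matrix.mul_smul, pow_succ, Matrix.mul_assoc]
    conv_lhs => rw [ih, this]
    rw [Finset.sum_range_succ, smul_add, smul_smul, smul_smul, ← pow_succ]
    abel

def dotForm {N : ℕ} (B C : Fin N → ℝ) : Matrix (Fin N) (Fin N) ℝ →ₗ[ℝ] ℝ where
  toFun M := C ⬝ᵥ M.mulVec B
  map_add' := by intros; simp [Matrix.add_mulVec, dotProduct_add]
  map_smul' := by intros; simp [Matrix.smul_mulVec, dotProduct_smul]


lemma pow_lemA {s : ℝ} (hs : s ≠ 0) {i n : ℕ} (h : i ≤ n) :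
    s ^ (n - i) * (s⁻¹) ^ n = (s⁻¹) ^ i := by
  have h2 : (s⁻¹) ^ n = (s⁻¹) ^ (n - i) * (s⁻¹) ^ i := by rw [← pow_add]; congr 1; omega
  rw [h2, ← mul_assoc, ← mul_pow, mul_inv_cancel₀ hs, one_pow, one_mul]

lemma pow_lemB {s : ℝ} (hs : s ≠ 0) {i k n : ℕ} (h : i + k ≤ n) :
    s ^ (n - i) * (s⁻¹) ^ k = s ^ (n - (i + k)) := by
  have h2 : s ^ (n - i) = s ^ (n - (i + k)) * s ^ k := by rw [← pow_add]; congr 1; omega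
  rw [h2, mul_assoc, ← mul_pow, mul_inv_cancel₀ hs, one_pow, mul_one]

lemma pow_lemC {s : ℝ} (hs : s ≠ 0) {i k n : ℕ} (hi : i ≤ n) (h : ¬ i + k ≤ n) :
    s ^ (n - i) * (s⁻¹) ^ k = (s⁻¹) ^ (i + k - n) := by
  have h2 : (s⁻¹) ^ k = (s⁻¹) ^ (n - i) * (s⁻¹) ^ (i + k - n) := by rw [← pow_add]; congr 1; omega
  rw [h2, ← mul_assoc, ← mul_pow, mul_inv_cancel₀ hs, one_pow, one_mul]

lemma poly_algebra (n : ℕ) (a b h : ℕ → ℝ) (s ρ : ℝ) (hs0 : 0 < s)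
    (heq : (∑ i ∈ Finset.range (n + 1), a i * s ^ (n - i)) *
        ((∑ k ∈ Finset.range n, (s⁻¹) ^ (k + 1) * h (k + 1)) + (s⁻¹) ^ n * ρ + h 0) =
      ∑ j ∈ Finset.range (n + 1), b j * s ^ (n - j)) :
    ∑ j ∈ Finset.range (n + 1),
        (b j - ∑ i ∈ Finset.range (j + 1), a i * h (j - i)) * s ^ (n - j)
      = (∑ p ∈ (Finset.range (n + 1) ×ˢ Finset.range (n + 1)).filter
            (fun p => ¬ p.1 + p.2 ≤ n), a p.1 * h p.2 * (s⁻¹) ^ (p.1 + p.2 - n))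
        + ρ * ∑ i ∈ Finset.range (n + 1), a i * (s⁻¹) ^ i := by
  have hsne : s ≠ 0 := ne_of_gt hs0
  -- rewrite inner factor
  have h1 : (∑ k ∈ Finset.range n, (s⁻¹) ^ (k + 1) * h (k + 1)) + (s⁻¹) ^ n * ρ + h 0
      = (∑ k ∈ Finset.range (n + 1), h k * (s⁻¹) ^ k) + (s⁻¹) ^ n * ρ := by
    rw [Finset.sum_range_succ', pow_zero, mul_one,
      Finset.sum_congr rfl (fun k (_ : k ∈ Finset.range n) =>
        mul_comm (h (k + 1)) ((s⁻¹) ^ (k + 1)))]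
    ring
  rw [h1] at heq
  rw [mul_add] at heq
  -- second piece
  have h2 : (∑ i ∈ Finset.range (n + 1), a i * s ^ (n - i)) * ((s⁻¹) ^ n * ρ)
      = ρ * ∑ i ∈ Finset.range (n + 1), a i * (s⁻¹) ^ i := by
    rw [Finset.sum_mul, Finset.mul_sum]
    refine Finset.sum_congr rfl fun i hi => ?_
    rw [Finset.mem_range] at hi
    have := pow_lemA hsne (n := n) (i := i) (by omega)
    calc a i * s ^ (n - i) * ((s⁻¹) ^ n * ρ)
        = a i * (s ^ (n - i) * (s⁻¹) ^ n) * ρ := by ring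
      _ = ρ * (a i * (s⁻¹) ^ i) := by rw [this]; ring
  rw [h2] at heq
  -- first piece: double sum
  have h3 : (∑ i ∈ Finset.range (n + 1), a i * s ^ (n - i)) *
        (∑ k ∈ Finset.range (n + 1), h k * (s⁻¹) ^ k)
      = ∑ p ∈ Finset.range (n + 1) ×ˢ Finset.range (n + 1),
          a p.1 * h p.2 * (s ^ (n - p.1) * (s⁻¹) ^ p.2) := by
    rw [Finset.sum_mul_sum]
    rw [← Finset.sum_product']
    refine Finset.sum_congr rfl fun p _ => by ring
  rw [h3] at heq
  rw [← Finset.sum_filter_add_sum_filter_not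
      (Finset.range (n + 1) ×ˢ Finset.range (n + 1)) (fun p => p.1 + p.2 ≤ n)] at heq
  -- the ≤ part equals ∑_j c_j s^(n-j)
  have h4 : ∑ p ∈ (Finset.range (n + 1) ×ˢ Finset.range (n + 1)).filter
        (fun p => p.1 + p.2 ≤ n), a p.1 * h p.2 * (s ^ (n - p.1) * (s⁻¹) ^ p.2)
      = ∑ j ∈ Finset.range (n + 1),
          (∑ i ∈ Finset.range (j + 1), a i * h (j - i)) * s ^ (n - j) := by
    have hrw : ∀ p ∈ (Finset.range (n + 1) ×ˢ Finset.range (n + 1)).filter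
        (fun p => p.1 + p.2 ≤ n),
        a p.1 * h p.2 * (s ^ (n - p.1) * (s⁻¹) ^ p.2)
          = a p.1 * h p.2 * s ^ (n - (p.1 + p.2)) := by
      intro p hp
      simp only [Finset.mem_filter, Finset.mem_product, Finset.mem_range] at hp
      rw [pow_lemB hsne hp.2]
    rw [Finset.sum_congr rfl hrw]
    rw [Finset.sum_congr rfl (fun j _ => Finset.sum_mul _ _ _)]
    rw [Finset.sum_sigma']
    refine Finset.sum_nbij' (fun p => ⟨p.1 + p.2, p.1⟩) (fun q => (q.2, q.1 - q.2)) ?_ ?_ ?_ ?_ ?_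
    · intro p hp
      simp only [Finset.mem_filter, Finset.mem_product, Finset.mem_range] at hp
      simp only [Finset.mem_sigma, Finset.mem_range]
      omega
    · intro q hq
      simp only [Finset.mem_sigma, Finset.mem_range] at hq
      simp only [Finset.mem_filter, Finset.mem_product, Finset.mem_range]
      omega
    · intro p hp
      have hp2 : p.1 + p.2 - p.1 = p.2 := by omega
      simp [hp2]
    · intro q hq
      simp only [Finset.mem_sigma, Finset.mem_range] at hq
      set_option linter.unnecessarySeqFocus false in
      ext <;> simp <;> omega
    · intro p hp
      simp only [Finset.mem_filter, Finset.mem_product, Finset.mem_range] at hp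
      rw [show p.1 + p.2 - p.1 = p.2 from by omega]
  rw [h4] at heq
  -- the > part
  have h5 : ∑ p ∈ (Finset.range (n + 1) ×ˢ Finset.range (n + 1)).filter
        (fun p => ¬ p.1 + p.2 ≤ n), a p.1 * h p.2 * (s ^ (n - p.1) * (s⁻¹) ^ p.2)
      = ∑ p ∈ (Finset.range (n + 1) ×ˢ Finset.range (n + 1)).filter
        (fun p => ¬ p.1 + p.2 ≤ n), a p.1 * h p.2 * (s⁻¹) ^ (p.1 + p.2 - n) := by
    refine Finset.sum_congr rfl fun p hp => ?_
    simp only [Finset.mem_filter, Finset.mem_product, Finset.mem_range] at hp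
    rw [pow_lemC hsne (by omega) hp.2]
  rw [h5] at heq
  rw [Finset.sum_congr rfl (fun j (_ : j ∈ Finset.range (n+1)) => sub_mul (b j) _ (s ^ (n - j))),
    Finset.sum_sub_distrib]
  linarith [heq]


-- the inverse of (s•1 - A) tends to 0 as s → ∞
lemma inv_tendsto_zero {N : ℕ} (A : Matrix (Fin N) (Fin N) ℝ) {R : ℝ} (hR : ‖A‖ ≤ R)
    (hU : ∀ s : ℝ, R < s → IsUnit (s • (1 : Matrix (Fin N) (Fin N) ℝ) - A)) :
    Filter.Tendsto (fun s : ℝ => (s • (1 : Matrix (Fin N) (Fin N) ℝ) - A)⁻¹)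
      Filter.atTop (𝓝 0) := by
  have hbound : ∀ s : ℝ, R < s →
      ‖(s • (1 : Matrix (Fin N) (Fin N) ℝ) - A)⁻¹‖
        ≤ ‖(1 : Matrix (Fin N) (Fin N) ℝ)‖ / (s - R) := by
    intro s hsR
    have hs0 : (0:ℝ) < s := lt_of_le_of_lt (le_trans (norm_nonneg A) hR) hsR
    have hMi : (s • (1 : Matrix (Fin N) (Fin N) ℝ) - A)
        * (s • (1 : Matrix (Fin N) (Fin N) ℝ) - A)⁻¹ = 1 :=
      Matrix.mul_nonsing_inv _ ((Matrix.isUnit_iff_isUnit_det _).mp (hU s hsR))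
    set M := (s • (1 : Matrix (Fin N) (Fin N) ℝ) - A)⁻¹ with hM
    have key : s • M = 1 + A * M := by
      have h' := hMi
      rw [sub_mul, Matrix.smul_mul, Matrix.one_mul] at h'
      rw [← eq_add_of_sub_eq h']
    have h1 : s * ‖M‖ ≤ ‖(1 : Matrix (Fin N) (Fin N) ℝ)‖ + R * ‖M‖ := by
      calc s * ‖M‖ = ‖s • M‖ := by rw [norm_smul]; simp [abs_of_pos hs0]
        _ = ‖1 + A * M‖ := by rw [key]
        _ ≤ ‖(1 : Matrix (Fin N) (Fin N) ℝ)‖ + ‖A * M‖ := norm_add_le _ _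
        _ ≤ ‖(1 : Matrix (Fin N) (Fin N) ℝ)‖ + ‖A‖ * ‖M‖ := by gcongr; exact norm_mul_le _ _
        _ ≤ ‖(1 : Matrix (Fin N) (Fin N) ℝ)‖ + R * ‖M‖ := by gcongr
    rw [le_div_iff₀ (by linarith)]
    nlinarith [norm_nonneg M]
  have hg : Filter.Tendsto (fun s : ℝ => ‖(1 : Matrix (Fin N) (Fin N) ℝ)‖ / (s - R))
      Filter.atTop (𝓝 0) := by
    apply Filter.Tendsto.div_atTop tendsto_const_nhds
    exact Filter.tendsto_atTop_add_const_right _ _ Filter.tendsto_id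
  apply squeeze_zero_norm' _ hg
  filter_upwards [Filter.eventually_gt_atTop R] with s hs using hbound s hs

/-- If the state-space representation realizes the transfer function
`(Σ_{j=0}^n b_j s^{n-j}) / (Σ_{i=0}^n a_i s^{n-i})` (with `a_0 = 1`) for all large real
`s`, then the numerator coefficients are the convolution of the denominator coefficients
with the Markov parameters: `b_j = Σ_{i=0}^{j} a_i h_{j-i}`. -/
theorem realization_coefficients_eq_convolution {N : ℕ} (A : Matrix (Fin N) (Fin N) ℝ)
    (B C : Fin N → ℝ) (D : ℝ) (n : ℕ) (hn : 1 ≤ n) (a b : ℕ → ℝ) (ha : a 0 = 1)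
    (hrealize : ∃ R : ℝ, ‖A‖ ≤ R ∧ ∀ s : ℝ, R < s →
      IsUnit (s • (1 : Matrix (Fin N) (Fin N) ℝ) - A) ∧
        (∑ i ∈ Finset.range (n + 1), a i * s ^ (n - i)) *
            (C ⬝ᵥ ((s • (1 : Matrix (Fin N) (Fin N) ℝ) - A)⁻¹).mulVec B + D) =
          ∑ j ∈ Finset.range (n + 1), b j * s ^ (n - j)) :
    ∀ j ≤ n, b j = ∑ i ∈ Finset.range (j + 1), a i * markovParam A B C D (j - i) := by
  obtain ⟨R, hRA, hs⟩ := hrealize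
  have hRnn : (0:ℝ) ≤ R := le_trans (norm_nonneg A) hRA
  set h : ℕ → ℝ := markovParam A B C D with hh
  set ψ : Matrix (Fin N) (Fin N) ℝ →ₗ[ℝ] ℝ :=
    (dotForm B C).comp (LinearMap.mulLeft ℝ (A ^ n)) with hψ
  set T : Finset (ℕ × ℕ) := (Finset.range (n + 1) ×ˢ Finset.range (n + 1)).filter
    (fun p => ¬ p.1 + p.2 ≤ n) with hT
  -- the remainder tends to zero
  have hinvt := inv_tendsto_zero A hRA (fun s hsR => (hs s hsR).1)
  have hρ : Filter.Tendsto (fun s : ℝ => ψ ((s • (1 : Matrix (Fin N) (Fin N) ℝ) - A)⁻¹))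
      Filter.atTop (𝓝 0) := by
    have hcont : Continuous ψ := ψ.continuous_of_finiteDimensional
    have := (hcont.tendsto 0).comp hinvt
    simpa [Function.comp_def] using this
  -- the eventual identity
  have hFE : ∀ s : ℝ, R < s →
      ∑ j ∈ Finset.range (n + 1),
          (b j - ∑ i ∈ Finset.range (j + 1), a i * h (j - i)) * s ^ (n - j)
        = (∑ p ∈ T, a p.1 * h p.2 * (s⁻¹) ^ (p.1 + p.2 - n))
          + ψ ((s • (1 : Matrix (Fin N) (Fin N) ℝ) - A)⁻¹)
            * ∑ i ∈ Finset.range (n + 1), a i * (s⁻¹) ^ i := by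
    intro s hsR
    obtain ⟨hU, heq⟩ := hs s hsR
    have hs0 : (0:ℝ) < s := lt_of_le_of_lt hRnn hsR
    apply poly_algebra n a b h s _ hs0
    have hexp : C ⬝ᵥ ((s • (1 : Matrix (Fin N) (Fin N) ℝ) - A)⁻¹).mulVec B
        = (∑ k ∈ Finset.range n, (s⁻¹) ^ (k + 1) * h (k + 1))
          + (s⁻¹) ^ n * ψ ((s • (1 : Matrix (Fin N) (Fin N) ℝ) - A)⁻¹) := by
      have e1 : C ⬝ᵥ ((s • (1 : Matrix (Fin N) (Fin N) ℝ) - A)⁻¹).mulVec B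
          = dotForm B C ((s • (1 : Matrix (Fin N) (Fin N) ℝ) - A)⁻¹) := rfl
      rw [e1]
      conv_lhs => rw [trunc_inv A (ne_of_gt hs0) hU n]
      rw [map_add, map_sum]
      simp only [_root_.map_smul, smul_eq_mul]
      congr 1
    rw [hexp] at heq
    exact heq
  -- the right-hand side tends to zero
  have hinv0 : Filter.Tendsto (fun s : ℝ => s⁻¹) Filter.atTop (𝓝 0) :=
    tendsto_inv_atTop_zero
  have l1 : Filter.Tendsto (fun s : ℝ => ∑ p ∈ T, a p.1 * h p.2 * (s⁻¹) ^ (p.1 + p.2 - n))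
      Filter.atTop (𝓝 0) := by
    have key : ∀ p ∈ T, Filter.Tendsto (fun s : ℝ =>
        a p.1 * h p.2 * (s⁻¹) ^ (p.1 + p.2 - n)) Filter.atTop (𝓝 (0:ℝ)) := by
      intro p hp
      rw [hT, Finset.mem_filter] at hp
      have hm : p.1 + p.2 - n ≠ 0 := by
        simp only [Finset.mem_product, Finset.mem_range] at hp
        omega
      have h2 : Filter.Tendsto (fun s : ℝ => (s⁻¹) ^ (p.1 + p.2 - n))
          Filter.atTop (𝓝 0) := by
        simpa [zero_pow hm] using hinv0.pow (p.1 + p.2 - n)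
      simpa using h2.const_mul (a p.1 * h p.2)
    have := tendsto_finset_sum T key
    simpa using this
  have l2 : Filter.Tendsto (fun s : ℝ => ∑ i ∈ Finset.range (n + 1), a i * (s⁻¹) ^ i)
      Filter.atTop (𝓝 (∑ i ∈ Finset.range (n + 1), a i * (0:ℝ) ^ i)) := by
    apply tendsto_finset_sum
    intro i _
    exact (hinv0.pow i).const_mul (a i)
  have hT0 : Filter.Tendsto (fun s : ℝ =>
      (∑ p ∈ T, a p.1 * h p.2 * (s⁻¹) ^ (p.1 + p.2 - n))
        + ψ ((s • (1 : Matrix (Fin N) (Fin N) ℝ) - A)⁻¹)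
          * ∑ i ∈ Finset.range (n + 1), a i * (s⁻¹) ^ i) Filter.atTop (𝓝 0) := by
    simpa using l1.add (hρ.mul l2)
  -- the polynomial
  set q : Polynomial ℝ := ∑ j ∈ Finset.range (n + 1),
    Polynomial.C (b j - ∑ i ∈ Finset.range (j + 1), a i * h (j - i))
      * Polynomial.X ^ (n - j) with hq
  have heval : ∀ s : ℝ, q.eval s = ∑ j ∈ Finset.range (n + 1),
      (b j - ∑ i ∈ Finset.range (j + 1), a i * h (j - i)) * s ^ (n - j) := by
    intro s
    rw [hq, Polynomial.eval_finset_sum]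
    refine Finset.sum_congr rfl fun j _ => ?_
    rw [Polynomial.eval_mul, Polynomial.eval_C, Polynomial.eval_pow, Polynomial.eval_X]
  have hq0 : q = 0 := by
    apply poly_eq_zero_of_tendsto q
    apply Filter.Tendsto.congr' _ hT0
    filter_upwards [Filter.eventually_gt_atTop R] with s hsR
    rw [heval s, hFE s hsR]
  intro j hj
  have hcoeff := congrArg (fun p => Polynomial.coeff p (n - j)) hq0
  simp only [Polynomial.coeff_zero] at hcoeff
  rw [hq, Polynomial.finset_sum_coeff] at hcoeff
  simp only [Polynomial.coeff_C_mul, Polynomial.coeff_X_pow] at hcoeff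
  rw [Finset.sum_eq_single j] at hcoeff
  · rw [if_pos rfl, mul_one, sub_eq_zero] at hcoeff
    exact hcoeff
  · intro k hk hkj
    rw [Finset.mem_range] at hk
    rw [if_neg (by omega), mul_zero]
  · intro hj'
    exact absurd (Finset.mem_range.mpr (by omega)) hj'
end

section
/- Let n ≥ 1, let a, h : ℕ → ℝ with a_0 = 1, and define b_j = Σ_{i=0}^{j} a_i h_{j-i}. Let Y⁺, Y⁻, U⁺, U⁻ : {0, …, n−1} → ℝ satisfy, for every p < n, the jump relation Y⁺_p − Y⁻_p = Σ_{q=0}^{p} h_{p-q} · (U⁺_q − U⁻_q). Then the following identity holds in ℝ[X]: Σ_{p=0}^{n-1} (Σ_{i=0}^{n-1-p} a_i X^{n-1-p-i}) Y⁺_p − Σ_{p=0}^{n-1} (Σ_{i=0}^{n-1-p} b_i X^{n-1-p-i}) U⁺_p = Σ_{p=0}^{n-1} (Σ_{i=0}^{n-1-p} a_i X^{n-1-p-i}) Y⁻_p − Σ_{p=0}^{n-1} (Σ_{i=0}^{n-1-p} b_i X^{n-1-p-i}) U⁻_p. [Theorem 2 of the paper: the initial-condition polynomial appearing in the Laplace-transform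 solution of the ODE y^{(n)} + Σ a_i y^{(n-i)} = Σ b_j u^{(n-j)} gives the same result whether evaluated with first conditions (values at 0⁺) or previous conditions (values at 0⁻).] -/
open Finset Polynomial

lemma triangle_swap {M : Type*} [AddCommMonoid M] (m : ℕ) (f : ℕ → ℕ → M) :
    ∑ j ∈ Finset.range m, ∑ i ∈ Finset.range (m - j), f j i
      = ∑ k ∈ Finset.range m, ∑ i ∈ Finset.range (k + 1), f (k - i) i := by
  rw [Finset.sum_sigma', Finset.sum_sigma']
  refine Finset.sum_nbij' (fun x => ⟨x.1 + x.2, x.2⟩) (fun x => ⟨x.1 - x.2, x.2⟩)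
    ?_ ?_ ?_ ?_ ?_
  · intro x hx; simp only [Finset.mem_sigma, Finset.mem_range] at *; omega
  · intro x hx; simp only [Finset.mem_sigma, Finset.mem_range] at *; omega
  · intro x hx; simp only [Finset.mem_sigma, Finset.mem_range] at hx
    have : x.1 + x.2 - x.2 = x.1 := by omega
    simp [this]
  · intro x hx; simp only [Finset.mem_sigma, Finset.mem_range] at hx
    have : x.1 - x.2 + x.2 = x.1 := by omega
    simp [this]
  · intro x hx; simp only [Finset.mem_sigma, Finset.mem_range] at hx
    simp only
    congr 1
    omega

/-- Theorem 2 of the paper: if the jumps satisfy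
`Y⁺_p − Y⁻_p = Σ_{q=0}^{p} h_{p-q} (U⁺_q − U⁻_q)` for all `p < n`, and
`b_j = Σ_{i=0}^{j} a_i h_{j-i}` with `a_0 = 1`, then the initial-condition polynomial of
the Laplace-transform solution is the same whether evaluated with first conditions
(values at `0⁺`) or with previous conditions (values at `0⁻`). -/
theorem initial_condition_polynomial_invariance (n : ℕ) (hn : 1 ≤ n) (a h : ℕ → ℝ)
    (ha : a 0 = 1) (b : ℕ → ℝ)
    (hb : ∀ j, b j = ∑ i ∈ Finset.range (j + 1), a i * h (j - i))
    (Yp Ym Up Um : ℕ → ℝ)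
    (hjump : ∀ p < n, Yp p - Ym p =
      ∑ q ∈ Finset.range (p + 1), h (p - q) * (Up q - Um q)) :
    (∑ p ∈ Finset.range n,
        (∑ i ∈ Finset.range (n - p),
          Polynomial.C (a i) * (Polynomial.X : ℝ[X]) ^ (n - 1 - p - i)) * Polynomial.C (Yp p)) -
      (∑ p ∈ Finset.range n,
        (∑ i ∈ Finset.range (n - p),
          Polynomial.C (b i) * (Polynomial.X : ℝ[X]) ^ (n - 1 - p - i)) * Polynomial.C (Up p)) =
    (∑ p ∈ Finset.range n,
        (∑ i ∈ Finset.range (n - p),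
          Polynomial.C (a i) * (Polynomial.X : ℝ[X]) ^ (n - 1 - p - i)) * Polynomial.C (Ym p)) -
      (∑ p ∈ Finset.range n,
        (∑ i ∈ Finset.range (n - p),
          Polynomial.C (b i) * (Polynomial.X : ℝ[X]) ^ (n - 1 - p - i)) * Polynomial.C (Um p)) := by
  set A : ℕ → ℝ[X] := fun p => ∑ i ∈ Finset.range (n - p),
    Polynomial.C (a i) * (Polynomial.X : ℝ[X]) ^ (n - 1 - p - i) with hA
  set B : ℕ → ℝ[X] := fun p => ∑ i ∈ Finset.range (n - p),
    Polynomial.C (b i) * (Polynomial.X : ℝ[X]) ^ (n - 1 - p - i) with hB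
  have key : ∑ p ∈ Finset.range n, A p * Polynomial.C (Yp p - Ym p)
      = ∑ p ∈ Finset.range n, B p * Polynomial.C (Up p - Um p) := by
    -- expand the jump relation
    have step1 : ∑ p ∈ Finset.range n, A p * Polynomial.C (Yp p - Ym p)
        = ∑ p ∈ Finset.range n, ∑ q ∈ Finset.range (p + 1),
            A p * Polynomial.C (h (p - q)) * Polynomial.C (Up q - Um q) := by
      refine Finset.sum_congr rfl fun p hp => ?_
      rw [hjump p (Finset.mem_range.mp hp), map_sum, Finset.mul_sum]
      refine Finset.sum_congr rfl fun q _ => ?_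
      rw [map_mul]; ring
    -- swap the order of summation (triangular sum)
    have step2 : ∑ p ∈ Finset.range n, ∑ q ∈ Finset.range (p + 1),
            A p * Polynomial.C (h (p - q)) * Polynomial.C (Up q - Um q)
        = ∑ q ∈ Finset.range n, (∑ j ∈ Finset.range (n - q),
            A (q + j) * Polynomial.C (h j)) * Polynomial.C (Up q - Um q) := by
      have distr : ∑ q ∈ Finset.range n, (∑ j ∈ Finset.range (n - q),
            A (q + j) * Polynomial.C (h j)) * Polynomial.C (Up q - Um q)
          = ∑ q ∈ Finset.range n, ∑ j ∈ Finset.range (n - q),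
            A (q + j) * Polynomial.C (h j) * Polynomial.C (Up q - Um q) :=
        Finset.sum_congr rfl fun q _ => Finset.sum_mul _ _ _
      rw [distr,
        triangle_swap n (fun q j => A (q + j) * Polynomial.C (h j) * Polynomial.C (Up q - Um q))]
      refine Finset.sum_congr rfl fun k hk => ?_
      rw [← Finset.sum_range_reflect
        (fun q => A k * Polynomial.C (h (k - q)) * Polynomial.C (Up q - Um q)) (k + 1)]
      refine Finset.sum_congr rfl fun i hi => ?_
      simp only [Finset.mem_range] at hi
      have h3 : k + 1 - 1 - i = k - i := by omega
      rw [h3]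
      have h1 : k - i + i = k := by omega
      have h2 : k - (k - i) = i := by omega
      rw [h1, h2]
    rw [step1, step2]
    refine Finset.sum_congr rfl fun q hq => ?_
    congr 1
    -- per-q identity: ∑_j A (q+j) * C (h j) = B q
    simp only [Finset.mem_range] at hq
    simp only [hA, hB]
    have hm : ∀ j, n - (q + j) = n - q - j := fun j => by omega
    have he : ∀ j i, n - 1 - (q + j) - i = n - q - 1 - j - i := fun j i => by omega
    calc ∑ j ∈ Finset.range (n - q),
          (∑ i ∈ Finset.range (n - (q + j)),
            Polynomial.C (a i) * (Polynomial.X : ℝ[X]) ^ (n - 1 - (q + j) - i)) * Polynomial.C (h j)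
        = ∑ j ∈ Finset.range (n - q), ∑ i ∈ Finset.range (n - q - j),
            Polynomial.C (a i) * Polynomial.C (h j) * (Polynomial.X : ℝ[X]) ^ (n - q - 1 - j - i) := by
          refine Finset.sum_congr rfl fun j _ => ?_
          rw [hm j, Finset.sum_mul]
          refine Finset.sum_congr rfl fun i _ => ?_
          rw [he j i]; ring
      _ = ∑ k ∈ Finset.range (n - q), ∑ i ∈ Finset.range (k + 1),
            Polynomial.C (a i) * Polynomial.C (h (k - i)) * (Polynomial.X : ℝ[X]) ^ (n - q - 1 - (k - i) - i) := by
          exact triangle_swap (n - q)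
            (fun j i => Polynomial.C (a i) * Polynomial.C (h j) * (Polynomial.X : ℝ[X]) ^ (n - q - 1 - j - i))
      _ = ∑ k ∈ Finset.range (n - q),
            Polynomial.C (b k) * (Polynomial.X : ℝ[X]) ^ (n - 1 - q - k) := by
          refine Finset.sum_congr rfl fun k hk => ?_
          simp only [Finset.mem_range] at hk
          rw [hb k, map_sum, Finset.sum_mul]
          refine Finset.sum_congr rfl fun i hi => ?_
          simp only [Finset.mem_range] at hi
          have : n - q - 1 - (k - i) - i = n - 1 - q - k := by omega
          rw [this, map_mul]
  have expand : ∑ p ∈ Finset.range n, A p * Polynomial.C (Yp p)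
        - ∑ p ∈ Finset.range n, A p * Polynomial.C (Ym p)
      = ∑ p ∈ Finset.range n, B p * Polynomial.C (Up p)
        - ∑ p ∈ Finset.range n, B p * Polynomial.C (Um p) := by
    rw [← Finset.sum_sub_distrib, ← Finset.sum_sub_distrib]
    have l : ∑ x ∈ Finset.range n, (A x * Polynomial.C (Yp x) - A x * Polynomial.C (Ym x))
        = ∑ p ∈ Finset.range n, A p * Polynomial.C (Yp p - Ym p) :=
      Finset.sum_congr rfl fun p _ => by rw [map_sub]; ring
    have r : ∑ x ∈ Finset.range n, (B x * Polynomial.C (Up x) - B x * Polynomial.C (Um x))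
        = ∑ p ∈ Finset.range n, B p * Polynomial.C (Up p - Um p) :=
      Finset.sum_congr rfl fun p _ => by rw [map_sub]; ring
    rw [l, r, key]
  linear_combination expand
end

section
/- Let n ≥ 1 and let x : ℝ → ℝ^N be continuous at 0, and u_0, …, u_{n-1}, y_0, …, y_{n-1} : ℝ → ℝ satisfy, for every j < n and every t ≠ 0, y_j(t) = ⟨C, A^j x(t)⟩ + Σ_{i=0}^{j} h_{j-i} · u_i(t). Suppose each u_i has one-sided limits u_i⁻ (as t → 0⁻) and u_i⁺ (as t → 0⁺), denote by y_j⁻, y_j⁺ the corresponding one-sided limits of y_j (which exist), let a : ℕ → ℝ with a_0 = 1, and set b_j = Σ_{i=0}^{j} a_i h_{j-i}. Then in ℝ[X]: Σ_{p=0}^{n-1} (Σ_{i=0}^{n-1-p} a_i X^{n-1-p-i}) y_p⁺ − Σ_{p=0}^{n-1} (Σ_{i=0}^{n-1-p} b_i X^{n-1-p-i}) u_p⁺ = Σ_{p=0}^{n-1} (Σ_{i=0}^{n-1-p} a_i X^{n-1-p-i}) y_p⁻ − Σ_{p=0}^{n-1} (Σ_{i=0}^{n-1-p} b_i X^{n-1-p-i})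 u_p⁻. -/
open Finset Matrix Filter Topology Polynomial

private lemma tri_sum {M : Type*} [AddCommMonoid M] (m : ℕ) (f : ℕ → ℕ → M) :
    ∑ q ∈ Finset.range m, ∑ k ∈ Finset.range (m - q), f q k
      = ∑ k ∈ Finset.range m, ∑ j ∈ Finset.range (k + 1), f (k - j) j := by
  rw [Finset.sum_sigma', Finset.sum_sigma']
  apply Finset.sum_nbij' (fun x => (⟨x.1 + x.2, x.2⟩ : Σ _ : ℕ, ℕ))
    (fun x => (⟨x.1 - x.2, x.2⟩ : Σ _ : ℕ, ℕ)) <;>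
    simp only [Finset.mem_sigma, Finset.mem_range] <;> rintro ⟨p, q⟩ h <;>
    simp_all <;> omega

private lemma sum_tri_comm {M : Type*} [AddCommMonoid M] (n : ℕ) (f : ℕ → ℕ → M) :
    ∑ p ∈ Finset.range n, ∑ i ∈ Finset.range (p + 1), f p i
      = ∑ i ∈ Finset.range n, ∑ q ∈ Finset.range (n - i), f (i + q) i := by
  rw [Finset.sum_sigma', Finset.sum_sigma']
  apply Finset.sum_nbij' (fun x => (⟨x.2, x.1 - x.2⟩ : Σ _ : ℕ, ℕ))
    (fun x => (⟨x.1 + x.2, x.1⟩ : Σ _ : ℕ, ℕ)) <;>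
    simp only [Finset.mem_sigma, Finset.mem_range] <;> rintro ⟨p, q⟩ h <;>
    simp_all <;> first | omega | (congr 1; omega)

/-- Theorem 2 of the paper, from the state-space representation: with the state continuous
at `0`, the one-sided limits of the output derivatives `y_j` at `0` (which exist) and
those of the input derivatives `u_i` yield the same initial-condition polynomial in the
Laplace-transform solution, whether previous (`0⁻`) or first (`0⁺`) conditions are used. -/
theorem initial_condition_polynomial_invariance_of_ssr {N : ℕ}
    (A : Matrix (Fin N) (Fin N) ℝ) (B C : Fin N → ℝ) (D : ℝ) (n : ℕ) (hn : 1 ≤ n)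
    (x : ℝ → Fin N → ℝ) (hx : ContinuousAt x 0)
    (u y : ℕ → ℝ → ℝ)
    (hy : ∀ j < n, ∀ t : ℝ, t ≠ 0 →
      y j t = C ⬝ᵥ (A ^ j).mulVec (x t) +
        ∑ i ∈ Finset.range (j + 1), markovParam A B C D (j - i) * u i t)
    (um up ym yp : ℕ → ℝ)
    (hum : ∀ i < n, Tendsto (u i) (𝓝[<] 0) (𝓝 (um i)))
    (hup : ∀ i < n, Tendsto (u i) (𝓝[>] 0) (𝓝 (up i)))
    (hym : ∀ j < n, Tendsto (y j) (𝓝[<] 0) (𝓝 (ym j)))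
    (hyp : ∀ j < n, Tendsto (y j) (𝓝[>] 0) (𝓝 (yp j)))
    (a : ℕ → ℝ) (ha : a 0 = 1) (b : ℕ → ℝ)
    (hb : ∀ j, b j = ∑ i ∈ Finset.range (j + 1), a i * markovParam A B C D (j - i)) :
    (∑ p ∈ Finset.range n,
        (∑ i ∈ Finset.range (n - p),
          Polynomial.C (a i) * (Polynomial.X : ℝ[X]) ^ (n - 1 - p - i)) * Polynomial.C (yp p)) -
      (∑ p ∈ Finset.range n,
        (∑ i ∈ Finset.range (n - p),
          Polynomial.C (b i) * (Polynomial.X : ℝ[X]) ^ (n - 1 - p - i)) * Polynomial.C (up p)) =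
    (∑ p ∈ Finset.range n,
        (∑ i ∈ Finset.range (n - p),
          Polynomial.C (a i) * (Polynomial.X : ℝ[X]) ^ (n - 1 - p - i)) * Polynomial.C (ym p)) -
      (∑ p ∈ Finset.range n,
        (∑ i ∈ Finset.range (n - p),
          Polynomial.C (b i) * (Polynomial.X : ℝ[X]) ^ (n - 1 - p - i)) * Polynomial.C (um p)) := by
  set h : ℕ → ℝ := markovParam A B C D with hh
  -- Step 1: the jump of `y j` equals the weighted sum of the jumps of the `u i`.
  have key : ∀ j < n, yp j - ym j
      = ∑ i ∈ Finset.range (j + 1), h (j - i) * (up i - um i) := by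
    intro j hj
    have hf : ContinuousAt (fun t => C ⬝ᵥ (A ^ j).mulVec (x t)) 0 := by
      have : Continuous (fun v : Fin N → ℝ => C ⬝ᵥ (A ^ j).mulVec v) := by
        simp only [dotProduct, mulVec]
        fun_prop
      exact this.continuousAt.comp hx
    set L : ℝ := C ⬝ᵥ (A ^ j).mulVec (x 0) with hL
    have hcongr : ∀ t : ℝ, t ≠ 0 →
        (fun t => C ⬝ᵥ (A ^ j).mulVec (x t)
          + ∑ i ∈ Finset.range (j + 1), h (j - i) * u i t) t = y j t := by
      intro t ht; exact (hy j hj t ht).symm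
    have hne : ∀ s : Set ℝ, (∀ t ∈ s, t ≠ 0) →
        ∀ (w : ℕ → ℝ), (∀ i < n, Tendsto (u i) (𝓝[s] 0) (𝓝 (w i))) →
        Tendsto (y j) (𝓝[s] 0)
          (𝓝 (L + ∑ i ∈ Finset.range (j + 1), h (j - i) * w i)) := by
      intro s hs w hw
      have h1 : Tendsto (fun t => C ⬝ᵥ (A ^ j).mulVec (x t)
          + ∑ i ∈ Finset.range (j + 1), h (j - i) * u i t) (𝓝[s] 0)
          (𝓝 (L + ∑ i ∈ Finset.range (j + 1), h (j - i) * w i)) := by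
        apply Tendsto.add
        · exact (hf.tendsto).mono_left nhdsWithin_le_nhds
        · apply tendsto_finset_sum
          intro i hi
          have hin : i < n := by have := Finset.mem_range.mp hi; omega
          exact (hw i hin).const_mul _
      refine h1.congr' ?_
      filter_upwards [self_mem_nhdsWithin] with t ht
      exact hcongr t (hs t ht)
    have hmlim : ym j = L + ∑ i ∈ Finset.range (j + 1), h (j - i) * um i := by
      refine tendsto_nhds_unique (hym j hj) (hne _ (fun t ht => ne_of_lt ht) um hum)
    have hplim : yp j = L + ∑ i ∈ Finset.range (j + 1), h (j - i) * up i := by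
      refine tendsto_nhds_unique (hyp j hj) (hne _ (fun t ht => ne_of_gt ht) up hup)
    rw [hmlim, hplim, add_sub_add_left_eq_sub, ← Finset.sum_sub_distrib]
    exact Finset.sum_congr rfl fun i _ => (mul_sub _ _ _).symm
  -- Step 2: reduce to an identity about the jumps.
  rw [sub_eq_sub_iff_sub_eq_sub]
  rw [← Finset.sum_sub_distrib, ← Finset.sum_sub_distrib]
  have l1 : ∀ (v w : ℕ → ℝ) (P : ℕ → ℝ[X]),
      ∑ p ∈ Finset.range n, (P p * Polynomial.C (v p) - P p * Polynomial.C (w p))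
        = ∑ p ∈ Finset.range n, P p * Polynomial.C (v p - w p) := by
    intro v w P
    refine Finset.sum_congr rfl fun p _ => ?_
    rw [map_sub, mul_sub]
  rw [l1, l1]
  -- substitute the jumps of y
  have l2 : ∀ p ∈ Finset.range n,
      (∑ i ∈ Finset.range (n - p),
          Polynomial.C (a i) * (Polynomial.X : ℝ[X]) ^ (n - 1 - p - i)) *
        Polynomial.C (yp p - ym p)
      = ∑ i ∈ Finset.range (p + 1),
          (∑ k ∈ Finset.range (n - p),
            Polynomial.C (a k) * (Polynomial.X : ℝ[X]) ^ (n - 1 - p - k)) *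
          Polynomial.C (h (p - i) * (up i - um i)) := by
    intro p hp
    rw [key p (Finset.mem_range.mp hp)]
    rw [map_sum, Finset.mul_sum]
  rw [Finset.sum_congr rfl l2, sum_tri_comm]
  -- now prove termwise in i
  refine Finset.sum_congr rfl fun i hi => ?_
  have hin : i < n := Finset.mem_range.mp hi
  -- inner identity: reorganize the double sum in (q, k)
  have inner : ∑ q ∈ Finset.range (n - i),
      (∑ k ∈ Finset.range (n - (i + q)),
        Polynomial.C (a k) * (Polynomial.X : ℝ[X]) ^ (n - 1 - (i + q) - k)) *
        Polynomial.C (h ((i + q) - i) * (up i - um i))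
      = (∑ k ∈ Finset.range (n - i),
          Polynomial.C (b k) * (Polynomial.X : ℝ[X]) ^ (n - 1 - i - k)) *
        Polynomial.C (up i - um i) := by
    have e1 : ∀ q ∈ Finset.range (n - i), (i + q) - i = q := fun q _ => by omega
    set m := n - i with hm
    have hmn : ∀ q k, n - 1 - (i + q) - k = m - 1 - q - k := by intro q k; omega
    have hmn2 : ∀ q, n - (i + q) = m - q := by intro q; omega
    have hmn3 : ∀ k, n - 1 - i - k = m - 1 - k := by intro k; omega
    calc ∑ q ∈ Finset.range m,
          (∑ k ∈ Finset.range (n - (i + q)),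
            Polynomial.C (a k) * (Polynomial.X : ℝ[X]) ^ (n - 1 - (i + q) - k)) *
            Polynomial.C (h ((i + q) - i) * (up i - um i))
        = ∑ q ∈ Finset.range m, ∑ k ∈ Finset.range (m - q),
            (Polynomial.C (a k) * Polynomial.C (h q) * (Polynomial.X : ℝ[X]) ^ (m - 1 - q - k))
              * Polynomial.C (up i - um i) := by
          refine Finset.sum_congr rfl fun q hq => ?_
          rw [e1 q hq, hmn2, Finset.sum_mul]
          refine Finset.sum_congr rfl fun k _ => ?_
          rw [hmn, Polynomial.C_mul]
          ring
      _ = ∑ k ∈ Finset.range m, ∑ j ∈ Finset.range (k + 1),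
            (Polynomial.C (a j) * Polynomial.C (h (k - j)) * (Polynomial.X : ℝ[X]) ^ (m - 1 - (k - j) - j))
              * Polynomial.C (up i - um i) := tri_sum m _
      _ = (∑ k ∈ Finset.range m,
            Polynomial.C (b k) * (Polynomial.X : ℝ[X]) ^ (m - 1 - k)) *
          Polynomial.C (up i - um i) := by
          rw [Finset.sum_mul]
          refine Finset.sum_congr rfl fun k hk => ?_
          have hkm : k < m := Finset.mem_range.mp hk
          rw [hb k, map_sum, Finset.sum_mul, Finset.sum_mul]
          refine Finset.sum_congr rfl fun j hj => ?_
          have hjk : j < k + 1 := Finset.mem_range.mp hj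
          have : m - 1 - (k - j) - j = m - 1 - k := by omega
          rw [this, Polynomial.C_mul]
    simpa only [hmn3] using this
  calc ∑ q ∈ Finset.range (n - i),
        (∑ k ∈ Finset.range (n - (i + q)),
          Polynomial.C (a k) * (Polynomial.X : ℝ[X]) ^ (n - 1 - (i + q) - k)) *
          Polynomial.C (h ((i + q) - i) * (up i - um i))
      = (∑ k ∈ Finset.range (n - i),
          Polynomial.C (b k) * (Polynomial.X : ℝ[X]) ^ (n - 1 - i - k)) *
        Polynomial.C (up i - um i) := inner
end
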